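/- For all integers n, k ≥ 1 with n ≥ 2k − 1, the number of flattened Catalan words of length n with exactly k runs of weak ascents equals 2^(n − 2k + 1) · C(n − 1, 2k − 2), where C denotes the binomial coefficient; and this number is 0 when n < 2k − 1. -/

import Mathlib

/-- `w : ℕ → ℕ` encodes a Catalan word of length `n` (0-indexed letters
`w 0, w 1, …, w (n-1)`): the first letter is `0`, each letter is at most the
previous one plus one, and `w` is normalized to vanish at positions `≥ n`. -/
def IsCatalanWord (n : ℕ) (w : ℕ → ℕ) : Prop :=
  w 0 = 0 ∧ (∀ i, i + 1 < n → w (i + 1) ≤ w i + 1) ∧ ∀ i, n ≤ i → w i = 0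

/-- `j` is the starting position of one of the maximal weakly increasing
contiguous subwords (runs of weak ascents) of the length-`n` word `w`. -/
def IsRunStart (n : ℕ) (w : ℕ → ℕ) (j : ℕ) : Prop :=
  j < n ∧ (j = 0 ∨ w j < w (j - 1))

/-- A word is flattened when the leading terms of its maximal weakly increasing
contiguous subwords, read from left to right, form a weakly increasing sequence. -/
def IsFlattened (n : ℕ) (w : ℕ → ℕ) : Prop :=
  ∀ i j, IsRunStart n w i → IsRunStart n w j → i ≤ j → w i ≤ w j

/-- The set of flattened Catalan words of length `n`. -/
def FlatCat (n : ℕ) : Set (ℕ → ℕ) := {w | IsCatalanWord n w ∧ IsFlattened n w}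

/-- Number of maximal strictly increasing contiguous subwords (runs of ascents):
`1 + #{ i : w_i ≥ w_{i+1} }`. -/
noncomputable def runsAsc (n : ℕ) (w : ℕ → ℕ) : ℕ :=
  1 + {i : ℕ | i + 1 < n ∧ w (i + 1) ≤ w i}.ncard

/-- Number of maximal weakly increasing contiguous subwords (runs of weak
ascents): `1 + #{ i : w_i > w_{i+1} }`. -/
noncomputable def wruns (n : ℕ) (w : ℕ → ℕ) : ℕ :=
  1 + {i : ℕ | i + 1 < n ∧ w (i + 1) < w i}.ncard

/-- Number of maximal strictly decreasing contiguous subwords (runs of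
descents): `1 + #{ i : w_i ≤ w_{i+1} }`. -/
noncomputable def runsDesc (n : ℕ) (w : ℕ → ℕ) : ℕ :=
  1 + {i : ℕ | i + 1 < n ∧ w i ≤ w (i + 1)}.ncard

/-- Number of maximal weakly decreasing contiguous subwords (runs of weak
descents): `1 + #{ i : w_i < w_{i+1} }`. -/
noncomputable def wrunsDesc (n : ℕ) (w : ℕ → ℕ) : ℕ :=
  1 + {i : ℕ | i + 1 < n ∧ w i < w (i + 1)}.ncard

/-- An `ℓ`-valley `a b^ℓ (b+1)` (with `a > b`) occurring at position `i` of the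
length-`n` word `w`. -/
def IsLValley (n : ℕ) (w : ℕ → ℕ) (ℓ i : ℕ) : Prop :=
  i + ℓ + 1 < n ∧ w (i + 1) < w i ∧ (∀ t, 1 ≤ t → t ≤ ℓ → w (i + t) = w (i + 1)) ∧
    w (i + ℓ + 1) = w (i + 1) + 1

/-- Number of `ℓ`-valleys of `w`. -/
noncomputable def lValleyCount (n : ℕ) (w : ℕ → ℕ) (ℓ : ℕ) : ℕ :=
  {i : ℕ | IsLValley n w ℓ i}.ncard

/-- Number of valleys of `w` (all `ℓ`-valleys, `ℓ ≥ 1`). -/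
noncomputable def valleyCount (n : ℕ) (w : ℕ → ℕ) : ℕ :=
  {p : ℕ × ℕ | 1 ≤ p.2 ∧ IsLValley n w p.2 p.1}.ncard

/-- A symmetric valley `a (a-1)^ℓ a` (with `ℓ ≥ 1`) occurring at position `i`. -/
def IsSymValley (n : ℕ) (w : ℕ → ℕ) (ℓ i : ℕ) : Prop :=
  i + ℓ + 1 < n ∧ w i = w (i + 1) + 1 ∧ (∀ t, 1 ≤ t → t ≤ ℓ → w (i + t) = w (i + 1)) ∧
    w (i + ℓ + 1) = w i

/-- Number of symmetric valleys of `w` (over all `ℓ ≥ 1`). -/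
noncomputable def symValleyCount (n : ℕ) (w : ℕ → ℕ) : ℕ :=
  {p : ℕ × ℕ | 1 ≤ p.2 ∧ IsSymValley n w p.2 p.1}.ncard

/-- An `ℓ`-peak `a (a+1)^ℓ b` (with `a ≥ b`) occurring at position `i` of the
length-`n` word `w`. -/
def IsLPeak (n : ℕ) (w : ℕ → ℕ) (ℓ i : ℕ) : Prop :=
  i + ℓ + 1 < n ∧ (∀ t, 1 ≤ t → t ≤ ℓ → w (i + t) = w i + 1) ∧ w (i + ℓ + 1) ≤ w i

/-- Number of `ℓ`-peaks of `w`. -/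
noncomputable def lPeakCount (n : ℕ) (w : ℕ → ℕ) (ℓ : ℕ) : ℕ :=
  {i : ℕ | IsLPeak n w ℓ i}.ncard

/-- Number of peaks of `w` (all `ℓ`-peaks, `ℓ ≥ 1`). -/
noncomputable def peakCount (n : ℕ) (w : ℕ → ℕ) : ℕ :=
  {p : ℕ × ℕ | 1 ≤ p.2 ∧ IsLPeak n w p.2 p.1}.ncard

/-- A symmetric peak `a (a+1)^ℓ a` (with `ℓ ≥ 1`) occurring at position `i`. -/
def IsSymPeak (n : ℕ) (w : ℕ → ℕ) (ℓ i : ℕ) : Prop :=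
  i + ℓ + 1 < n ∧ (∀ t, 1 ≤ t → t ≤ ℓ → w (i + t) = w i + 1) ∧ w (i + ℓ + 1) = w i

/-- Number of symmetric peaks of `w` (over all `ℓ ≥ 1`). -/
noncomputable def symPeakCount (n : ℕ) (w : ℕ → ℕ) : ℕ :=
  {p : ℕ × ℕ | 1 ≤ p.2 ∧ IsSymPeak n w p.2 p.1}.ncard



namespace FC
open Finset
attribute [local instance 10] Classical.propDecidable



/-- number of 2's among `g 1, …, g i` -/
def cnt (g : ℕ → ℕ) (i : ℕ) : ℕ := ((Finset.Icc 1 i).filter (fun l => g l = 2)).card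

def IsUpStep (g : ℕ → ℕ) (j : ℕ) : Prop := g j = 1 ∨ (g j = 2 ∧ cnt g j % 2 = 1)

instance (g : ℕ → ℕ) : DecidablePred (IsUpStep g) := fun _ => by
  unfold IsUpStep; infer_instance

/-- the word built from the code `g` -/
def bw (n : ℕ) (g : ℕ → ℕ) (i : ℕ) : ℕ :=
  if i < n then
    ((Finset.Icc 1 i).filter
      (fun j => IsUpStep g j ∧ (cnt g j % 2 = 0 ∨ cnt g i ≤ cnt g j))).card
  else 0

lemma Icc1_succ (i : ℕ) : Finset.Icc 1 (i+1) = insert (i+1) (Finset.Icc 1 i) := by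
  ext j; simp only [Finset.mem_Icc, Finset.mem_insert]; omega

lemma cnt_zero (g : ℕ → ℕ) : cnt g 0 = 0 := by simp [cnt]

lemma cnt_succ (g : ℕ → ℕ) (i : ℕ) :
    cnt g (i+1) = cnt g i + if g (i+1) = 2 then 1 else 0 := by
  rw [cnt, cnt, Icc1_succ, Finset.filter_insert]
  split
  · rw [Finset.card_insert_of_notMem (by simp)]
  · simp

lemma cnt_mono (g : ℕ → ℕ) : Monotone (cnt g) := by
  intro a b h
  exact Finset.card_le_card (Finset.filter_subset_filter _ (Finset.Icc_subset_Icc_right h))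

lemma cnt_lt (g : ℕ → ℕ) {p q : ℕ} (hq : g q = 2) (h : p < q) : cnt g p < cnt g q := by
  obtain ⟨q, rfl⟩ : ∃ q', q = q' + 1 := ⟨q - 1, by omega⟩
  have h1 := cnt_mono g (show p ≤ q by omega)
  have h2 := cnt_succ g q
  rw [if_pos hq] at h2
  omega

lemma one_le_of_two {g : ℕ → ℕ} {p : ℕ} (hp : g p = 2) (h : 1 ≤ cnt g p) : 1 ≤ p := by
  by_contra h0
  have : p = 0 := by omega
  subst this
  rw [cnt_zero] at h; omega

lemma rank_inj {g : ℕ → ℕ} {p q : ℕ} (hp : g p = 2) (hq : g q = 2)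
    (h : cnt g p = cnt g q) : p = q ∨ (p = 0 ∧ cnt g p = 0) ∨ (q = 0 ∧ cnt g q = 0) := by
  rcases lt_trichotomy p q with hlt | he | hlt
  · have := cnt_lt g hq hlt; omega
  · exact Or.inl he
  · have := cnt_lt g hp hlt; omega

lemma exists_rank {g : ℕ → ℕ} {r : ℕ} (hr : 1 ≤ r) :
    ∀ i, r ≤ cnt g i → ∃ p, 1 ≤ p ∧ p ≤ i ∧ g p = 2 ∧ cnt g p = r := by
  intro i
  induction i with
  | zero => rw [cnt_zero]; omega
  | succ i ih =>
    intro h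
    have h2 := cnt_succ g i
    by_cases hg : g (i+1) = 2
    · rw [if_pos hg] at h2
      rcases Nat.lt_or_ge (cnt g i) r with hlt | hge
      · exact ⟨i+1, by omega, le_refl _, hg, by omega⟩
      · obtain ⟨p, h1, h2, h3, h4⟩ := ih hge
        exact ⟨p, h1, by omega, h3, h4⟩
    · rw [if_neg hg] at h2
      obtain ⟨p, h1, h2', h3, h4⟩ := ih (by omega)
      exact ⟨p, h1, by omega, h3, h4⟩

lemma no_two_between' {g : ℕ → ℕ} {p q : ℕ} (h : cnt g q ≤ cnt g p)
    {t : ℕ} (h1 : p < t) (h2 : t ≤ q) : g t ≠ 2 := by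
  intro ht
  have := cnt_lt g ht h1
  have := cnt_mono g h2
  omega

lemma no_two_between {g : ℕ → ℕ} {p q : ℕ} (hq : g q = 2)
    (h : cnt g q = cnt g p + 1) {t : ℕ} (h1 : p < t) (h2 : t < q) : g t ≠ 2 := by
  have hq1 : q = (q - 1) + 1 := by omega
  have h2' := cnt_succ g (q - 1)
  rw [← hq1, if_pos hq] at h2'
  exact no_two_between' (q := q - 1) (by omega) h1 (by omega)



lemma bw_of_ge {n : ℕ} (g : ℕ → ℕ) {i : ℕ} (h : n ≤ i) : bw n g i = 0 := by
  rw [bw, if_neg (by omega)]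

lemma bw_zero (n : ℕ) (g : ℕ → ℕ) : bw n g 0 = 0 := by
  rw [bw]; split <;> simp

lemma bw_eq {n i : ℕ} (g : ℕ → ℕ) (h : i < n) :
    bw n g i = ((Finset.Icc 1 i).filter
      (fun j => IsUpStep g j ∧ (cnt g j % 2 = 0 ∨ cnt g i ≤ cnt g j))).card := by
  rw [bw, if_pos h]

lemma bw_flat {n : ℕ} {g : ℕ → ℕ} {i : ℕ} (h : i + 1 < n) (hg : g (i+1) ≠ 1)
    (hg2 : g (i+1) ≠ 2) : bw n g (i+1) = bw n g i := by
  have hc : cnt g (i+1) = cnt g i := by have := cnt_succ g i; rw [if_neg hg2] at this; omega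
  rw [bw_eq g h, bw_eq g (by omega), Icc1_succ, Finset.filter_insert,
    if_neg (by rintro ⟨h1 | ⟨h1, -⟩, -⟩ <;> simp_all [IsUpStep])]
  congr 1
  rw [hc]

lemma bw_up {n : ℕ} {g : ℕ → ℕ} {i : ℕ} (h : i + 1 < n) (hg : IsUpStep g (i+1)) :
    bw n g (i+1) = bw n g i + 1 := by
  rw [bw_eq g h, bw_eq g (by omega)]
  have hcs := cnt_succ g i
  have key : ∀ j, j ∈ Finset.Icc 1 i →
      ((IsUpStep g j ∧ (cnt g j % 2 = 0 ∨ cnt g (i+1) ≤ cnt g j)) ↔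
       (IsUpStep g j ∧ (cnt g j % 2 = 0 ∨ cnt g i ≤ cnt g j))) := by
    intro j hj
    have hm : cnt g j ≤ cnt g i := cnt_mono g (Finset.mem_Icc.mp hj).2
    rcases hg with h1 | ⟨h2, h3⟩
    · rw [if_neg (by omega)] at hcs
      constructor <;> rintro ⟨hu, hd⟩ <;> exact ⟨hu, by omega⟩
    · rw [if_pos h2] at hcs
      constructor <;> rintro ⟨hu, hd⟩ <;> exact ⟨hu, by omega⟩
  rw [Icc1_succ, Finset.filter_insert, if_pos ⟨hg, Or.inr (le_refl _)⟩,
    Finset.card_insert_of_notMem (by simp), Finset.filter_congr key]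

lemma bw_succ_le {n : ℕ} {g : ℕ → ℕ} {i : ℕ} (h : i + 1 < n) :
    bw n g (i+1) ≤ bw n g i + 1 := by
  rw [bw_eq g h, bw_eq g (by omega)]
  have : (Finset.Icc 1 (i+1)).filter
      (fun j => IsUpStep g j ∧ (cnt g j % 2 = 0 ∨ cnt g (i+1) ≤ cnt g j)) ⊆
      insert (i+1) ((Finset.Icc 1 i).filter
      (fun j => IsUpStep g j ∧ (cnt g j % 2 = 0 ∨ cnt g i ≤ cnt g j))) := by
    intro j hj
    rw [Finset.mem_filter, Finset.mem_Icc] at hj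
    rcases Nat.lt_or_ge j (i+1) with hlt | hge
    · refine Finset.mem_insert_of_mem (Finset.mem_filter.mpr ⟨Finset.mem_Icc.mpr (by omega), hj.2.1, ?_⟩)
      have := cnt_mono g (show i ≤ i + 1 by omega)
      rcases hj.2.2 with h1 | h1
      · exact Or.inl h1
      · exact Or.inr (by omega)
    · have hj1 : j = i + 1 := by omega
      subst hj1
      exact Finset.mem_insert_self _ _
  calc _ ≤ _ := Finset.card_le_card this
    _ ≤ _ := Finset.card_insert_le _ _

lemma bw_desc {n : ℕ} {g : ℕ → ℕ} {i p : ℕ} (h : i + 1 < n) (hg : g (i+1) = 2)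
    (hev : cnt g (i+1) % 2 = 0) (hp : g p = 2) (hcp : cnt g (i+1) = cnt g p + 1) :
    bw n g (i+1) = bw n g (p-1) := by
  have hp1 : 1 ≤ p := one_le_of_two hp (by omega)
  have hpi : p < i + 1 := by
    by_contra hc
    rcases Nat.lt_or_ge (i+1) p with hlt | hge
    · have := cnt_lt g hp hlt; omega
    · have : p = i + 1 := by omega
      subst this; omega
  have hcs := cnt_succ g i
  rw [if_pos hg] at hcs
  have hcpm : cnt g (p-1) = cnt g p - 1 ∧ 1 ≤ cnt g p := by
    have hq1 : p = (p - 1) + 1 := by omega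
    have h2' := cnt_succ g (p - 1)
    rw [← hq1, if_pos hp] at h2'
    omega
  rw [bw_eq g h, bw_eq g (show p - 1 < n by omega)]
  congr 1
  apply Finset.ext
  intro j
  simp only [Finset.mem_filter, Finset.mem_Icc]
  constructor
  · rintro ⟨⟨hj1, hj2⟩, hu, hal⟩
    -- show j ≤ p - 1, and alive at p-1
    have hmj : cnt g j ≤ cnt g (i+1) := cnt_mono g hj2
    have hje : cnt g j % 2 = 0 := by
      rcases hal with h1 | h1
      · exact h1
      · -- cnt g j ≥ cnt g (i+1), j ≤ i+1 so cnt g j = cnt g (i+1)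
        exfalso
        have hje : cnt g j = cnt g (i+1) := by omega
        rcases Nat.lt_or_ge j (i+1) with hlt | hge
        · have := cnt_lt g hg hlt; omega
        · have : j = i + 1 := by omega
          subst this
          rcases hu with h2 | ⟨h2, h3⟩ <;> omega
    have hjp : j < p := by
      by_contra hc
      have := cnt_mono g (show p ≤ j by omega)
      -- cnt g j ∈ [cnt p, cnt (i+1)], even, cnt p odd, cnt(i+1) even
      have hje2 : cnt g j = cnt g (i+1) := by omega
      rcases Nat.lt_or_ge j (i+1) with hlt | hge
      · have := cnt_lt g hg hlt; omega
      · have : j = i + 1 := by omega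
        subst this
        rcases hu with h2 | ⟨h2, h3⟩ <;> omega
    exact ⟨⟨hj1, by omega⟩, hu, Or.inl hje⟩
  · rintro ⟨⟨hj1, hj2⟩, hu, hal⟩
    have hmj : cnt g j ≤ cnt g (p-1) := cnt_mono g hj2
    have hje : cnt g j % 2 = 0 := by
      rcases hal with h1 | h1
      · exact h1
      · -- cnt g j = cnt g (p-1), which is even
        omega
    exact ⟨⟨hj1, by omega⟩, hu, Or.inl hje⟩

lemma bw_mono {n : ℕ} {g : ℕ → ℕ} (hval : ∀ t, g t ≤ 2) {a b : ℕ} (hab : a ≤ b) (hb : b < n)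
    (hnd : ∀ t, a < t → t ≤ b → ¬(g t = 2 ∧ cnt g t % 2 = 0)) : bw n g a ≤ bw n g b := by
  induction b with
  | zero =>
    have : a = 0 := Nat.le_zero.mp hab
    subst this; exact le_refl _
  | succ b ih =>
    rcases Nat.lt_or_ge a (b+1) with hlt | hge
    · have hih : bw n g a ≤ bw n g b :=
        ih (by omega) (by omega) (fun t h1 h2 => hnd t h1 (by omega))
      have hstep : bw n g b ≤ bw n g (b+1) := by
        rcases Nat.lt_or_ge (g (b+1)) 1 with h1 | h1
        · rw [bw_flat hb (by omega) (by omega)]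
        · rcases Nat.lt_or_ge (g (b+1)) 2 with h2 | h2
          · rw [bw_up hb (Or.inl (by omega))]; omega
          · have hg2 : g (b+1) = 2 := by have := hval (b+1); omega
            have hodd : cnt g (b+1) % 2 = 1 := by
              have := hnd (b+1) (by omega) (le_refl _)
              simp only [hg2, true_and] at this
              omega
            rw [bw_up hb (Or.inr ⟨hg2, hodd⟩)]; omega
      omega
    · have : a = b + 1 := by omega
      subst this; rfl


lemma bw_desc_lt {n : ℕ} {g : ℕ → ℕ} (hval : ∀ t, g t ≤ 2) {i : ℕ} (h : i + 1 < n)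
    (hg : g (i+1) = 2) (hev : cnt g (i+1) % 2 = 0) :
    bw n g (i+1) < bw n g i := by
  have hc1 : 1 ≤ cnt g (i+1) := by
    have := cnt_succ g i; rw [if_pos hg] at this; omega
  have hc2 : 2 ≤ cnt g (i+1) := by omega
  obtain ⟨p, hp1, hp2, hp3, hp4⟩ := exists_rank (g := g) (r := cnt g (i+1) - 1)
    (by omega) (i+1) (by omega)
  have hpne : p ≠ i + 1 := by intro hc; subst hc; omega
  have hpi : p ≤ i := by omega
  have hcs := cnt_succ g i
  rw [if_pos hg] at hcs
  rw [bw_desc h hg hev hp3 (by omega)]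
  -- bw (p-1) < bw p ≤ bw i
  have hpodd : cnt g p % 2 = 1 := by omega
  have hup : bw n g p = bw n g (p-1) + 1 := by
    have hp' : p = (p-1) + 1 := by omega
    rw [hp'] at hp3 hpodd ⊢
    exact bw_up (by omega) (Or.inr ⟨hp3, hpodd⟩)
  have hmono : bw n g p ≤ bw n g i := by
    apply bw_mono hval hpi (by omega)
    intro t ht1 ht2 ⟨hgt, _⟩
    exact no_two_between' (p := p) (q := i) (by omega) ht1 ht2 hgt
  omega

lemma bw_desc_char {n : ℕ} {g : ℕ → ℕ} (hval : ∀ t, g t ≤ 2) {i : ℕ} (h : i + 1 < n) :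
    bw n g (i+1) < bw n g i ↔ (g (i+1) = 2 ∧ cnt g (i+1) % 2 = 0) := by
  constructor
  · intro hlt
    by_contra hc
    rcases Nat.lt_or_ge (g (i+1)) 1 with h1 | h1
    · rw [bw_flat h (by omega) (by omega)] at hlt; omega
    · rcases Nat.lt_or_ge (g (i+1)) 2 with h2 | h2
      · rw [bw_up h (Or.inl (by omega))] at hlt; omega
      · have hg2 : g (i+1) = 2 := by have := hval (i+1); omega
        have hodd : cnt g (i+1) % 2 = 1 := by
          by_contra hc2
          exact hc ⟨hg2, by omega⟩
        rw [bw_up h (Or.inr ⟨hg2, hodd⟩)] at hlt; omega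
  · rintro ⟨h1, h2⟩
    exact bw_desc_lt hval h h1 h2

lemma bw_catalan {n : ℕ} {g : ℕ → ℕ} : IsCatalanWord n (bw n g) := by
  refine ⟨bw_zero n g, fun i hi => ?_, fun i hi => bw_of_ge g hi⟩
  have := bw_succ_le (g := g) hi
  omega

/-- count of even-rank 2's up to m -/
lemma rankcount (g : ℕ → ℕ) (m : ℕ) :
    ((Finset.Icc 1 m).filter (fun t => g t = 2 ∧ cnt g t % 2 = 0)).card = cnt g m / 2 := by
  induction m with
  | zero => simp [cnt_zero]
  | succ m ih =>
    have hcs := cnt_succ g m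
    rw [Icc1_succ, Finset.filter_insert]
    by_cases hg : g (m+1) = 2
    · rw [if_pos hg] at hcs
      by_cases hev : cnt g (m+1) % 2 = 0
      · rw [if_pos ⟨hg, hev⟩, Finset.card_insert_of_notMem (by simp), ih]
        omega
      · rw [if_neg (by rintro ⟨-, h⟩; omega), ih]
        omega
    · rw [if_neg hg] at hcs
      rw [if_neg (by rintro ⟨h, -⟩; omega), ih]
      omega

/-- the flattened property of `bw` -/
lemma bw_flat_aux {n : ℕ} {g : ℕ → ℕ} (hval : ∀ t, g t ≤ 2) :
    ∀ j, j < n → (j = 0 ∨ bw n g j < bw n g (j-1)) →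
    ∀ i, i ≤ j → i < n → (i = 0 ∨ bw n g i < bw n g (i-1)) → bw n g i ≤ bw n g j := by
  intro j
  induction j using Nat.strong_induction_on with
  | _ j IH =>
    intro hjn hj i hij hin hi
    rcases Nat.eq_zero_or_pos i with rfl | hi0
    · rw [bw_zero]; omega
    rcases Nat.eq_or_lt_of_le hij with rfl | hij'
    · exact le_refl _
    have hj0 : 1 ≤ j := by omega
    obtain ⟨j', rfl⟩ : ∃ j', j = j' + 1 := ⟨j-1, by omega⟩
    have hjd : bw n g (j'+1) < bw n g j' := by
      rcases hj with h | h
      · omega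
      · simpa using h
    have hdc : g (j'+1) = 2 ∧ cnt g (j'+1) % 2 = 0 := (bw_desc_char hval hjn).mp hjd
    have hc1 : 1 ≤ cnt g (j'+1) := by
      have := cnt_succ g j'; rw [if_pos hdc.1] at this; omega
    have hc2 : 2 ≤ cnt g (j'+1) := by omega
    obtain ⟨p, hp1, hp2, hp3, hp4⟩ := exists_rank (g := g) (r := cnt g (j'+1) - 1)
      (by omega) (j'+1) (by omega)
    have hpj : p < j' + 1 := by
      rcases Nat.eq_or_lt_of_le hp2 with heq | h
      · subst heq; omega
      · exact h
    have hbwj : bw n g (j'+1) = bw n g (p-1) := bw_desc hjn hdc.1 hdc.2 hp3 (by omega)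
    obtain ⟨i', rfl⟩ : ∃ i', i = i' + 1 := ⟨i-1, by omega⟩
    have hid : bw n g (i'+1) < bw n g i' := by
      rcases hi with h | h
      · omega
      · simpa using h
    have hic : g (i'+1) = 2 ∧ cnt g (i'+1) % 2 = 0 := (bw_desc_char hval (by omega)).mp hid
    have hip : i' + 1 ≤ p - 1 := by
      have : i' + 1 < p := by
        by_contra hc
        have h1 : p ≤ i' + 1 := by omega
        have h2 := cnt_mono g h1
        have h3 := cnt_lt g hdc.1 hij'
        omega
      omega
    set D := (Finset.Icc (i'+2) (p-1)).filter (fun t => g t = 2 ∧ cnt g t % 2 = 0) with hD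
    by_cases hne : D.Nonempty
    · obtain ⟨d, hdmem, hdmax⟩ : ∃ d ∈ D, ∀ t ∈ D, t ≤ d :=
        ⟨D.max' hne, D.max'_mem hne, fun t ht => D.le_max' t ht⟩
      rw [hD, Finset.mem_filter, Finset.mem_Icc] at hdmem
      obtain ⟨⟨hd1, hd2⟩, hd3, hd4⟩ := hdmem
      obtain ⟨d', rfl⟩ : ∃ d', d = d' + 1 := ⟨d-1, by omega⟩
      have hdn : d' + 1 < n := by omega
      have hddesc : bw n g (d'+1) < bw n g d' :=
        bw_desc_lt hval hdn hd3 hd4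
      have h1 : bw n g (i'+1) ≤ bw n g (d'+1) :=
        IH (d'+1) (by omega) hdn (Or.inr (by simpa using hddesc)) (i'+1) (by omega) hin hi
      have h2 : bw n g (d'+1) ≤ bw n g (p-1) := by
        apply bw_mono hval (by omega) (by omega)
        intro t ht1 ht2 hcon
        have htD : t ∈ D := by
          rw [hD, Finset.mem_filter, Finset.mem_Icc]
          exact ⟨⟨by omega, ht2⟩, hcon⟩
        have := hdmax t htD
        omega
      omega
    · have h2 : bw n g (i'+1) ≤ bw n g (p-1) := by
        apply bw_mono hval (by omega) (by omega)
        intro t ht1 ht2 hcon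
        exact hne ⟨t, by rw [hD, Finset.mem_filter, Finset.mem_Icc]; exact ⟨⟨by omega, ht2⟩, hcon⟩⟩
      omega

lemma bw_flattened {n : ℕ} {g : ℕ → ℕ} (hval : ∀ t, g t ≤ 2) :
    IsFlattened n (bw n g) := by
  intro i j hi hj hij
  exact bw_flat_aux hval j hj.1 hj.2 i hij hi.1 hi.2


lemma wruns_finset {n : ℕ} (hn : 1 ≤ n) (w : ℕ → ℕ) :
    wruns n w = 1 + ((Finset.Icc 1 (n-1)).filter (fun t => w t < w (t-1))).card := by
  rw [wruns]
  congr 1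
  have hset : {i : ℕ | i + 1 < n ∧ w (i + 1) < w i} =
      ↑((Finset.range (n-1)).filter (fun i => w (i+1) < w i)) := by
    ext i
    simp only [Set.mem_setOf_eq, Finset.coe_filter, Finset.mem_range, Set.mem_setOf_eq]
    constructor
    · rintro ⟨h1, h2⟩; exact ⟨by omega, h2⟩
    · rintro ⟨h1, h2⟩; exact ⟨by omega, h2⟩
  rw [hset, Set.ncard_coe_finset]
  refine Finset.card_bij' (fun i _ => i + 1) (fun t _ => t - 1) ?_ ?_ ?_ ?_
  · intro i hi
    simp only [Finset.mem_filter, Finset.mem_range] at hi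
    simp only [Finset.mem_filter, Finset.mem_Icc]
    exact ⟨⟨by omega, by omega⟩, by simpa using hi.2⟩
  · intro t ht
    simp only [Finset.mem_filter, Finset.mem_Icc] at ht
    simp only [Finset.mem_filter, Finset.mem_range]
    constructor
    · omega
    · have : t - 1 + 1 = t := by omega
      rw [this]
      exact ht.2
  · intro i _
    show i + 1 - 1 = i
    omega
  · intro t ht
    simp only [Finset.mem_filter, Finset.mem_Icc] at ht
    show t - 1 + 1 = t
    omega

lemma bw_wruns {n : ℕ} (hn : 1 ≤ n) {g : ℕ → ℕ} (hval : ∀ t, g t ≤ 2) :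
    wruns n (bw n g) = 1 + cnt g (n-1) / 2 := by
  rw [wruns_finset hn, ← rankcount g (n-1)]
  congr 2
  refine Finset.filter_congr (fun t ht => ?_)
  rw [Finset.mem_Icc] at ht
  obtain ⟨t', rfl⟩ : ∃ t', t = t' + 1 := ⟨t-1, by omega⟩
  simp only [Nat.add_sub_cancel, eq_iff_iff]
  exact bw_desc_char hval (by omega)


/-- ternary codes supported on `s` with exactly `r` twos -/
def Aset (s : Finset ℕ) (r : ℕ) : Set (ℕ → ℕ) :=
  {g | (∀ i, g i ≤ 2) ∧ (∀ i ∉ s, g i = 0) ∧ ((s.filter (fun l => g l = 2)).card = r)}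

lemma Aset_finite (s : Finset ℕ) (r : ℕ) : (Aset s r).Finite := by
  have hinj : Set.InjOn (fun (g : ℕ → ℕ) (i : s) => (⟨min (g i) 2, by omega⟩ : Fin 3))
      (Aset s r) := by
    intro g1 h1 g2 h2 heq
    funext i
    by_cases hi : i ∈ s
    · have := congrFun heq ⟨i, hi⟩
      simp only [Fin.mk.injEq] at this
      have e1 := h1.1 i
      have e2 := h2.1 i
      omega
    · rw [h1.2.1 i hi, h2.2.1 i hi]
  exact Set.Finite.of_finite_image (Set.toFinite _) hinj

lemma update_mem_Aset {s : Finset ℕ} {a : ℕ} (ha : a ∉ s) {g : ℕ → ℕ} {r : ℕ}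
    (hg : g ∈ Aset s r) {v : ℕ} (hv : v ≤ 2) :
    Function.update g a v ∈ Aset (insert a s)
      (if v = 2 then r + 1 else r) := by
  obtain ⟨hval, hsupp, hcard⟩ := hg
  refine ⟨fun i => ?_, fun i hi => ?_, ?_⟩
  · by_cases h : i = a
    · subst h; rw [Function.update_self]; exact hv
    · rw [Function.update_of_ne h]; exact hval i
  · rw [Finset.mem_insert, not_or] at hi
    rw [Function.update_of_ne hi.1]
    exact hsupp i hi.2
  · rw [Finset.filter_insert]
    have hfe : s.filter (fun l => Function.update g a v l = 2) =
        s.filter (fun l => g l = 2) := by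
      refine Finset.filter_congr (fun l hl => ?_)
      rw [Function.update_of_ne (by rintro rfl; exact ha hl)]
    by_cases h2 : v = 2
    · rw [if_pos (by rw [Function.update_self]; exact h2), if_pos h2,
        Finset.card_insert_of_notMem (by simp [ha]), hfe, hcard]
    · rw [if_neg (by rw [Function.update_self]; exact h2), if_neg h2, hfe, hcard]

lemma Aset_insert_decomp {s : Finset ℕ} {a : ℕ} (ha : a ∉ s) {g : ℕ → ℕ} {r : ℕ}
    (hg : g ∈ Aset (insert a s) r) :
    Function.update g a 0 ∈ Aset s (if g a = 2 then r - 1 else r) ∧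
      g = Function.update (Function.update g a 0) a (g a) ∧ (g a = 2 → 1 ≤ r) := by
  obtain ⟨hval, hsupp, hcard⟩ := hg
  have hfe : s.filter (fun l => Function.update g a 0 l = 2) =
      s.filter (fun l => g l = 2) := by
    refine Finset.filter_congr (fun l hl => ?_)
    rw [Function.update_of_ne (by rintro rfl; exact ha hl)]
  rw [Finset.filter_insert] at hcard
  refine ⟨⟨fun i => ?_, fun i hi => ?_, ?_⟩, ?_, ?_⟩
  · by_cases h : i = a
    · subst h; rw [Function.update_self]; omega
    · rw [Function.update_of_ne h]; exact hval i
  · by_cases h : i = a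
    · subst h; rw [Function.update_self]
    · rw [Function.update_of_ne h]
      exact hsupp i (by simp [h, hi])
  · rw [hfe]
    by_cases h2 : g a = 2
    · rw [if_pos h2] at hcard ⊢
      rw [Finset.card_insert_of_notMem (by simp [ha])] at hcard
      omega
    · rw [if_neg h2] at hcard ⊢
      exact hcard
  · funext i
    by_cases h : i = a
    · subst h; rw [Function.update_self]
    · rw [Function.update_of_ne h, Function.update_of_ne h]
  · intro h2
    rw [if_pos h2, Finset.card_insert_of_notMem (by simp [ha])] at hcard
    omega

lemma update_injOn (s : Finset ℕ) (a : ℕ) (r : ℕ) (v : ℕ) (ha : a ∉ s) :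
    Set.InjOn (fun g => Function.update g a v) (Aset s r) := by
  intro g1 h1 g2 h2 heq
  have heq' : Function.update g1 a v = Function.update g2 a v := heq
  funext i
  by_cases h : i = a
  · rw [h, h1.2.1 a ha, h2.2.1 a ha]
  · have := congrFun heq' i
    rwa [Function.update_of_ne h, Function.update_of_ne h] at this

lemma Aset_card (s : Finset ℕ) : ∀ r : ℕ, (Aset s r).ncard = s.card.choose r * 2^(s.card - r) := by
  induction s using Finset.induction_on with
  | empty =>
    intro r
    rcases r with _ | r
    · have : Aset ∅ 0 = {fun _ => 0} := by
        ext g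
        simp only [Aset, Set.mem_setOf_eq, Set.mem_singleton_iff]
        constructor
        · rintro ⟨-, h, -⟩
          funext i; exact h i (by simp)
        · rintro rfl
          exact ⟨fun i => by show (0:ℕ) ≤ 2; omega, fun i _ => rfl, by simp⟩
      rw [this]; simp
    · have : Aset ∅ (r+1) = ∅ := by
        ext g
        simp only [Aset, Set.mem_setOf_eq, Set.mem_empty_iff_false, iff_false]
        rintro ⟨-, -, h⟩
        simp at h
      rw [this]; simp
  | @insert a s ha ih =>
    intro r
    have hsplit : Aset (insert a s) r =
        ((fun g => Function.update g a 0) '' Aset s r ∪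
         (fun g => Function.update g a 1) '' Aset s r) ∪
        (if r = 0 then (∅ : Set (ℕ → ℕ)) else (fun g => Function.update g a 2) '' Aset s (r-1)) := by
      ext g
      constructor
      · intro hg
        obtain ⟨hmem, hrepr, hr1⟩ := Aset_insert_decomp ha hg
        have hva := hg.1 a
        interval_cases hgav : g a
        · rw [if_neg (by omega)] at hmem
          exact Or.inl (Or.inl ⟨_, hmem, by rw [← hgav] at hrepr ⊢; exact hrepr.symm⟩)
        · rw [if_neg (by omega)] at hmem
          exact Or.inl (Or.inr ⟨_, hmem, by rw [← hgav] at hrepr ⊢; exact hrepr.symm⟩)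
        · rw [if_pos rfl] at hmem
          rw [if_neg (by have := hr1 rfl; omega)]
          exact Or.inr ⟨_, hmem, by rw [← hgav] at hrepr ⊢; exact hrepr.symm⟩
      · intro hg
        rcases hg with (⟨g', hg', rfl⟩ | ⟨g', hg', rfl⟩) | hg
        · have := update_mem_Aset ha hg' (v := 0) (by omega)
          simpa using this
        · have := update_mem_Aset ha hg' (v := 1) (by omega)
          simpa using this
        · rcases Nat.eq_zero_or_pos r with rfl | hr
          · simp at hg
          · rw [if_neg (by omega)] at hg
            obtain ⟨g', hg', rfl⟩ := hg
            have := update_mem_Aset ha hg' (v := 2) (by omega)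
            rw [if_pos rfl] at this
            have hr' : r - 1 + 1 = r := by omega
            rwa [hr'] at this
    have hd01 : Disjoint ((fun g => Function.update g a 0) '' Aset s r)
        ((fun g => Function.update g a 1) '' Aset s r) := by
      rw [Set.disjoint_iff_inter_eq_empty]
      ext g
      simp only [Set.mem_inter_iff, Set.mem_image, Set.mem_empty_iff_false, iff_false, not_and]
      rintro ⟨g1, -, rfl⟩ ⟨g2, -, h⟩
      have := congrFun h a
      rw [Function.update_self, Function.update_self] at this
      omega
    have hd2 : Disjoint ((fun g => Function.update g a 0) '' Aset s r ∪
        (fun g => Function.update g a 1) '' Aset s r)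
        (if r = 0 then (∅ : Set (ℕ → ℕ)) else (fun g => Function.update g a 2) '' Aset s (r-1)) := by
      rcases Nat.eq_zero_or_pos r with rfl | hr
      · simp
      · rw [if_neg (by omega), Set.disjoint_iff_inter_eq_empty]
        ext g
        simp only [Set.mem_inter_iff, Set.mem_union, Set.mem_image, Set.mem_empty_iff_false,
          iff_false, not_and]
        rintro (⟨g1, -, rfl⟩ | ⟨g1, -, rfl⟩) ⟨g2, -, h⟩ <;>
          · have := congrFun h a
            rw [Function.update_self, Function.update_self] at this
            omega
    rw [hsplit, Set.ncard_union_eq hd2 (Set.Finite.union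
        (Set.Finite.image _ (Aset_finite s r)) (Set.Finite.image _ (Aset_finite s r)))
        (by split <;> [exact Set.finite_empty; exact Set.Finite.image _ (Aset_finite s (r-1))]),
      Set.ncard_union_eq hd01 (Set.Finite.image _ (Aset_finite s r))
        (Set.Finite.image _ (Aset_finite s r)),
      Set.ncard_image_of_injOn (update_injOn s a r 0 ha),
      Set.ncard_image_of_injOn (update_injOn s a r 1 ha)]
    rw [Finset.card_insert_of_notMem ha]
    rcases Nat.eq_zero_or_pos r with rfl | hr
    · rw [if_pos rfl, ih 0]
      simp only [Set.ncard_empty, Nat.choose_zero_right, one_mul, Nat.sub_zero, add_zero]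
      rw [pow_succ]
      ring
    · rw [if_neg (by omega), Set.ncard_image_of_injOn (update_injOn s a (r-1) 2 ha), ih r, ih (r-1)]
      obtain ⟨r', rfl⟩ : ∃ r', r = r' + 1 := ⟨r-1, by omega⟩
      simp only [Nat.add_sub_cancel]
      rw [Nat.choose_succ_succ]
      rcases Nat.lt_or_ge s.card (r'+1) with hlt | hge
      · simp only [Nat.succ_eq_add_one]
        rw [Nat.choose_eq_zero_of_lt hlt]
        have h3 : s.card + 1 - (r'+1) = s.card - r' := by omega
        rw [h3]
        ring
      · have h1 : s.card - r' = (s.card - (r'+1)) + 1 := by omega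
        have h2 : s.card + 1 - (r'+1) = (s.card - (r'+1)) + 1 := by omega
        rw [h1, h2]
        simp only [pow_succ, Nat.succ_eq_add_one]
        ring


def isMatch (n : ℕ) (w : ℕ → ℕ) (i : ℕ) : Prop :=
  ∃ q, i < q ∧ q < n ∧ w q < w (q-1) ∧ w q = w (i-1) ∧ ∀ l, i < l → l < q → ¬ w l < w (l-1)

open Classical in
noncomputable def gOf (n : ℕ) (w : ℕ → ℕ) (i : ℕ) : ℕ :=
  if 1 ≤ i ∧ i < n then
    (if w i < w (i-1) then 2
     else if w (i-1) < w i then (if isMatch n w i then 2 else 1) else 0)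
  else 0

open Classical in
noncomputable def wit (n : ℕ) (w : ℕ → ℕ) (i : ℕ) : ℕ :=
  if h : isMatch n w i then Classical.choose h else 0

lemma wit_spec {n : ℕ} {w : ℕ → ℕ} {i : ℕ} (h : isMatch n w i) :
    i < wit n w i ∧ wit n w i < n ∧ w (wit n w i) < w (wit n w i - 1) ∧
      w (wit n w i) = w (i-1) ∧ ∀ l, i < l → l < wit n w i → ¬ w l < w (l-1) := by
  rw [wit, dif_pos h]
  exact Classical.choose_spec h

lemma word_mono {w : ℕ → ℕ} {a b : ℕ} (hab : a ≤ b)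
    (hnd : ∀ l, a < l → l ≤ b → ¬ w l < w (l-1)) : w a ≤ w b := by
  induction b with
  | zero =>
    have : a = 0 := Nat.le_zero.mp hab
    subst this; exact le_refl _
  | succ b ih =>
    rcases Nat.eq_or_lt_of_le hab with rfl | h
    · exact le_refl _
    · have h1 : w a ≤ w b := ih (by omega) (fun l hl1 hl2 => hnd l hl1 (by omega))
      have h2 := hnd (b+1) (by omega) (le_refl _)
      simp only [Nat.add_sub_cancel] at h2
      omega

lemma word_step {n : ℕ} {w : ℕ → ℕ} (hw : IsCatalanWord n w) {i : ℕ}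
    (h1 : 1 ≤ i) (h2 : i < n) : w i ≤ w (i-1) + 1 := by
  obtain ⟨i', rfl⟩ : ∃ i', i = i' + 1 := ⟨i-1, by omega⟩
  simpa using hw.2.1 i' h2

lemma witness_unique {n : ℕ} {w : ℕ → ℕ} {p q q' : ℕ}
    (hq : p < q ∧ q < n ∧ w q < w (q-1) ∧ (∀ l, p < l → l < q → ¬ w l < w (l-1)))
    (hq' : p < q' ∧ q' < n ∧ w q' < w (q'-1) ∧ (∀ l, p < l → l < q' → ¬ w l < w (l-1))) :
    q = q' := by
  rcases lt_trichotomy q q' with h | h | h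
  · exact absurd hq.2.2.1 (hq'.2.2.2 q hq.1 h)
  · exact h
  · exact absurd hq'.2.2.1 (hq.2.2.2 q' hq'.1 h)

lemma match_unique_half {w : ℕ → ℕ} {q p p' : ℕ}
    (hp : 1 ≤ p ∧ p < q ∧ w (p-1) = w q ∧ w (p-1) < w p ∧
      (∀ l, p < l → l < q → ¬ w l < w (l-1)))
    (hp' : 1 ≤ p' ∧ p' < q ∧ w (p'-1) = w q ∧ w (p'-1) < w p' ∧
      (∀ l, p' < l → l < q → ¬ w l < w (l-1)))
    (hlt : p < p') : False := by
  have hm : w p ≤ w (p'-1) := by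
    apply word_mono (by omega)
    intro l hl1 hl2
    exact hp.2.2.2.2 l hl1 (by omega)
  obtain ⟨h1, h2, h3, h4, h5⟩ := hp
  obtain ⟨h1', h2', h3', h4', h5'⟩ := hp'
  omega

lemma match_unique {w : ℕ → ℕ} {q p p' : ℕ}
    (hp : 1 ≤ p ∧ p < q ∧ w (p-1) = w q ∧ w (p-1) < w p ∧
      (∀ l, p < l → l < q → ¬ w l < w (l-1)))
    (hp' : 1 ≤ p' ∧ p' < q ∧ w (p'-1) = w q ∧ w (p'-1) < w p' ∧
      (∀ l, p' < l → l < q → ¬ w l < w (l-1))) :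
    p = p' := by
  rcases lt_trichotomy p p' with h | h | h
  · exact absurd (match_unique_half hp hp' h) not_false
  · exact h
  · exact absurd (match_unique_half hp' hp h) not_false

lemma match_exists {n : ℕ} {w : ℕ → ℕ} (hw : IsCatalanWord n w) (hf : IsFlattened n w)
    {q : ℕ} (hq1 : 1 ≤ q) (hqn : q < n) (hqd : w q < w (q-1)) :
    ∃ p, 1 ≤ p ∧ p < q ∧ w (p-1) = w q ∧ w (p-1) < w p ∧
      (∀ l, p < l → l < q → ¬ w l < w (l-1)) := by
  set D := (Finset.Icc 1 (q-1)).filter (fun t => w t < w (t-1)) with hD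
  obtain ⟨s, hs_lt, hs_rs, hs_max⟩ :
      ∃ s, s ≤ q - 1 ∧ IsRunStart n w s ∧ (∀ l, s < l → l ≤ q - 1 → ¬ w l < w (l-1)) := by
    by_cases hne : D.Nonempty
    · obtain ⟨d, hdmem, hdmax⟩ : ∃ d ∈ D, ∀ t ∈ D, t ≤ d :=
        ⟨D.max' hne, D.max'_mem hne, fun t ht => D.le_max' t ht⟩
      rw [hD, Finset.mem_filter, Finset.mem_Icc] at hdmem
      refine ⟨d, hdmem.1.2, ⟨by omega, Or.inr hdmem.2⟩, fun l h1 h2 hc => ?_⟩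
      have hmem : l ∈ D := by
        rw [hD, Finset.mem_filter, Finset.mem_Icc]; exact ⟨⟨by omega, h2⟩, hc⟩
      have := hdmax l hmem; omega
    · refine ⟨0, by omega, ⟨by omega, Or.inl rfl⟩, fun l h1 h2 hc => ?_⟩
      exact hne ⟨l, by rw [hD, Finset.mem_filter, Finset.mem_Icc]; exact ⟨⟨by omega, h2⟩, hc⟩⟩
  have hsq : w s ≤ w q := hf s q hs_rs ⟨hqn, Or.inr hqd⟩ (by omega)
  have hsq1 : s < q - 1 := by
    rcases Nat.lt_or_ge s (q-1) with h | h
    · exact h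
    · exfalso
      have : s = q - 1 := by omega
      subst this
      omega
  set P := (Finset.Icc (s+1) (q-1)).filter (fun l => w q < w l) with hP
  have hPne : P.Nonempty := by
    refine ⟨q-1, ?_⟩
    rw [hP, Finset.mem_filter, Finset.mem_Icc]
    exact ⟨⟨by omega, le_refl _⟩, by omega⟩
  obtain ⟨p, hpmem, hpmin⟩ : ∃ p ∈ P, ∀ t ∈ P, p ≤ t :=
    ⟨P.min' hPne, P.min'_mem hPne, fun t ht => P.min'_le t ht⟩
  rw [hP, Finset.mem_filter, Finset.mem_Icc] at hpmem
  obtain ⟨⟨hp1, hp2⟩, hp3⟩ := hpmem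
  have hwp1 : w (p-1) ≤ w q := by
    rcases Nat.lt_or_ge s (p-1) with h | h
    · by_contra hc
      have hmem : p - 1 ∈ P := by
        rw [hP, Finset.mem_filter, Finset.mem_Icc]
        exact ⟨⟨by omega, by omega⟩, by omega⟩
      have := hpmin _ hmem; omega
    · have : p - 1 = s := by omega
      rw [this]; exact hsq
  have hcat : w p ≤ w (p-1) + 1 := word_step hw (by omega) (by omega)
  exact ⟨p, by omega, by omega, by omega, by omega,
    fun l h1 h2 hc => hs_max l (by omega) (by omega) hc⟩

section WordCount

variable {n : ℕ} {w : ℕ → ℕ}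

/-- descents up to t -/
def Dn (w : ℕ → ℕ) (t : ℕ) : Finset ℕ := (Finset.Icc 1 t).filter (fun l => w l < w (l-1))

open Classical in
/-- matched ups up to t -/
noncomputable def Mn (n : ℕ) (w : ℕ → ℕ) (t : ℕ) : Finset ℕ :=
  (Finset.Icc 1 t).filter (fun l => w (l-1) < w l ∧ isMatch n w l)

lemma MD_core (hw : IsCatalanWord n w) (hf : IsFlattened n w) {t : ℕ} (ht : t < n)
    (hcap : ∀ i, 1 ≤ i → i ≤ t → w (i-1) < w i → isMatch n w i → wit n w i ≤ t) :
    (Mn n w t).card = (Dn w t).card := by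
  apply Finset.card_nbij (wit n w)
  · intro i hi
    simp only [Mn, Finset.mem_coe, Finset.mem_filter, Finset.mem_Icc] at hi
    obtain ⟨⟨hi1, hi2⟩, hi3, hi4⟩ := hi
    obtain ⟨hw1, hw2, hw3, hw4, hw5⟩ := wit_spec hi4
    simp only [Dn, Finset.mem_coe, Finset.mem_filter, Finset.mem_Icc]
    exact ⟨⟨by omega, hcap i hi1 hi2 hi3 hi4⟩, hw3⟩
  · intro i hi i' hi' heq
    simp only [Finset.coe_filter, Set.mem_setOf_eq, Finset.mem_Icc, Mn] at hi hi'
    obtain ⟨⟨hi1, hi2⟩, hi3, hi4⟩ := hi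
    obtain ⟨⟨hi1', hi2'⟩, hi3', hi4'⟩ := hi'
    obtain ⟨ha1, ha2, ha3, ha4, ha5⟩ := wit_spec hi4
    obtain ⟨hb1, hb2, hb3, hb4, hb5⟩ := wit_spec hi4'
    rw [heq] at ha1 ha3 ha4 ha5
    exact match_unique (q := wit n w i')
      ⟨hi1, ha1, by omega, by omega, ha5⟩ ⟨hi1', hb1, by omega, by omega, hb5⟩
  · intro q hq
    simp only [Dn, Finset.coe_filter, Set.mem_setOf_eq, Finset.mem_Icc] at hq
    obtain ⟨⟨hq1, hq2⟩, hq3⟩ := hq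
    obtain ⟨p, h1, h2, h3, h4, h5⟩ := match_exists hw hf hq1 (by omega) hq3
    have hm : isMatch n w p := ⟨q, h2, by omega, hq3, h3.symm, h5⟩
    refine ⟨p, ?_, ?_⟩
    · simp only [Mn, Finset.coe_filter, Set.mem_setOf_eq, Finset.mem_Icc]
      exact ⟨⟨by omega, by omega⟩, by omega, hm⟩
    · obtain ⟨hw1, hw2, hw3, hw4, hw5⟩ := wit_spec hm
      exact (witness_unique ⟨hw1, hw2, hw3, hw5⟩ ⟨h2, by omega, hq3, h5⟩)

lemma MD_desc (hw : IsCatalanWord n w) (hf : IsFlattened n w) {t : ℕ}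
    (h1 : 1 ≤ t) (htn : t < n) (htd : w t < w (t-1)) :
    (Mn n w t).card = (Dn w t).card := by
  apply MD_core hw hf htn
  intro i hi1 hi2 hi3 hi4
  obtain ⟨ha1, ha2, ha3, ha4, ha5⟩ := wit_spec hi4
  by_contra hc
  have hne : i ≠ t := by
    intro h; subst h; omega
  exact ha5 t (by omega) (by omega) htd

lemma MD_top (hw : IsCatalanWord n w) (hf : IsFlattened n w) (hn : 1 ≤ n) :
    (Mn n w (n-1)).card = (Dn w (n-1)).card := by
  apply MD_core hw hf (by omega)
  intro i hi1 hi2 hi3 hi4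
  obtain ⟨ha1, ha2, ha3, ha4, ha5⟩ := wit_spec hi4
  omega

lemma MD_up (hw : IsCatalanWord n w) (hf : IsFlattened n w) {t : ℕ}
    (h1 : 1 ≤ t) (htn : t < n) (htu : w (t-1) < w t) (htm : isMatch n w t) :
    (Mn n w t).card = (Dn w t).card + 1 := by
  obtain ⟨hq1, hq2, hq3, hq4, hq5⟩ := wit_spec htm
  -- every matched up ≤ t-1 has witness ≤ t-1
  have hcap : ∀ i, 1 ≤ i → i ≤ t - 1 → w (i-1) < w i → isMatch n w i → wit n w i ≤ t - 1 := by
    intro i hi1 hi2 hi3 hi4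
    obtain ⟨ha1, ha2, ha3, ha4, ha5⟩ := wit_spec hi4
    by_contra hc
    -- wit i ≥ t; wit i ≠ t since t is an up-step
    have hne : wit n w i ≠ t := by
      intro h; rw [h] at ha3; omega
    have hgt : t < wit n w i := by omega
    -- then wit i = wit t
    have heqw : wit n w i = wit n w t := by
      apply witness_unique (p := t) ⟨hgt, ha2, ha3, ?_⟩ ⟨hq1, hq2, hq3, hq5⟩
      intro l hl1 hl2
      exact ha5 l (by omega) hl2
    -- so i and t are both matches of the same witness: i = t, contradiction
    have : i = t := by
      apply match_unique (q := wit n w t)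
        ⟨hi1, by omega, by rw [← heqw]; omega, hi3, by rw [← heqw] at hq5 ⊢; exact fun l m1 m2 => ha5 l m1 m2⟩
        ⟨by omega, hq1, by omega, htu, hq5⟩
    omega
  have hMt : Mn n w t = insert t (Mn n w (t-1)) := by
    ext l
    simp only [Mn, Finset.mem_filter, Finset.mem_Icc, Finset.mem_insert]
    constructor
    · rintro ⟨⟨hl1, hl2⟩, hl3, hl4⟩
      rcases Nat.eq_or_lt_of_le hl2 with h | h
      · exact Or.inl h
      · exact Or.inr ⟨⟨hl1, by omega⟩, hl3, hl4⟩
    · rintro (rfl | ⟨⟨hl1, hl2⟩, hl3, hl4⟩)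
      · exact ⟨⟨h1, le_refl _⟩, htu, htm⟩
      · exact ⟨⟨hl1, by omega⟩, hl3, hl4⟩
  have hDt : Dn w t = Dn w (t-1) := by
    obtain ⟨t', rfl⟩ : ∃ t', t = t' + 1 := ⟨t-1, by omega⟩
    simp only [Nat.add_sub_cancel] at htu ⊢
    rw [Dn, Dn, Icc1_succ, Finset.filter_insert,
      if_neg (by simp only [Nat.add_sub_cancel]; omega)]
  rw [hMt, Finset.card_insert_of_notMem (by
      intro hmem
      rw [Mn, Finset.mem_filter, Finset.mem_Icc] at hmem
      obtain ⟨⟨-, hx⟩, -⟩ := hmem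
      omega), hDt,
    MD_core hw hf (by omega) hcap]

lemma gOf_le_two (n : ℕ) (w : ℕ → ℕ) (i : ℕ) : gOf n w i ≤ 2 := by
  rw [gOf]
  split
  · split
    · omega
    · split
      · split <;> omega
      · omega
  · omega

lemma gOf_support {i : ℕ} (h : ¬(1 ≤ i ∧ i < n)) : gOf n w i = 0 := by
  rw [gOf, if_neg h]

lemma gOf_eq_two_iff {i : ℕ} (h1 : 1 ≤ i) (h2 : i < n) :
    gOf n w i = 2 ↔ (w i < w (i-1) ∨ (w (i-1) < w i ∧ isMatch n w i)) := by
  rw [gOf, if_pos ⟨h1, h2⟩]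
  by_cases hd : w i < w (i-1)
  · simp [hd]
  · rw [if_neg hd]
    by_cases hu : w (i-1) < w i
    · rw [if_pos hu]
      by_cases hm : isMatch n w i
      · simp [hm, hu, hd]
      · simp [hm, hu, hd]
    · rw [if_neg hu]; simp [hd, hu]

lemma cnt_gOf {t : ℕ} (htn : t < n) :
    cnt (gOf n w) t = (Dn w t).card + (Mn n w t).card := by
  have hsets : (Finset.Icc 1 t).filter (fun l => gOf n w l = 2) = Dn w t ∪ Mn n w t := by
    rw [Dn, Mn, ← Finset.filter_or]
    refine Finset.filter_congr (fun l hl => ?_)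
    rw [Finset.mem_Icc] at hl
    exact gOf_eq_two_iff (by omega) (by omega)
  rw [cnt, hsets, Finset.card_union_of_disjoint (by
    rw [Dn, Mn, Finset.disjoint_filter]
    intro l _ hl hc
    obtain ⟨hc1, -⟩ := hc
    omega)]

end WordCount


section RoundTrip

variable {n : ℕ} {w : ℕ → ℕ}

lemma gOf_eq_one {i : ℕ} (h1 : 1 ≤ i) (h2 : i < n) (hu : w (i-1) < w i)
    (hm : ¬ isMatch n w i) : gOf n w i = 1 := by
  rw [gOf, if_pos ⟨h1, h2⟩, if_neg (by omega), if_pos hu, if_neg hm]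

lemma gOf_eq_zero {i : ℕ} (h1 : 1 ≤ i) (h2 : i < n) (he : w i = w (i-1)) :
    gOf n w i = 0 := by
  rw [gOf, if_pos ⟨h1, h2⟩, if_neg (by omega), if_neg (by omega)]

lemma cnt_gOf_desc (hw : IsCatalanWord n w) (hf : IsFlattened n w) {t : ℕ}
    (h1 : 1 ≤ t) (htn : t < n) (htd : w t < w (t-1)) :
    cnt (gOf n w) t = 2 * (Dn w t).card := by
  rw [cnt_gOf htn, MD_desc hw hf h1 htn htd]; ring

lemma cnt_gOf_up (hw : IsCatalanWord n w) (hf : IsFlattened n w) {t : ℕ}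
    (h1 : 1 ≤ t) (htn : t < n) (htu : w (t-1) < w t) (htm : isMatch n w t) :
    cnt (gOf n w) t = 2 * (Dn w t).card + 1 := by
  rw [cnt_gOf htn, MD_up hw hf h1 htn htu htm]; ring

lemma bw_gOf (hw : IsCatalanWord n w) (hf : IsFlattened n w) : bw n (gOf n w) = w := by
  funext i
  induction i using Nat.strong_induction_on with
  | _ i IH =>
    rcases Nat.lt_or_ge i n with hin | hin
    swap
    · rw [bw_of_ge _ hin, hw.2.2 i hin]
    rcases Nat.eq_zero_or_pos i with rfl | hi0
    · rw [bw_zero, hw.1]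
    obtain ⟨i', rfl⟩ : ∃ i', i = i' + 1 := ⟨i-1, by omega⟩
    have hprev : bw n (gOf n w) i' = w i' := IH i' (by omega)
    have hcat : w (i'+1) ≤ w i' + 1 := hw.2.1 i' hin
    rcases lt_trichotomy (w (i'+1)) (w i') with hd | he | hu
    · -- descent at i'+1
      have hd' : w (i'+1) < w ((i'+1)-1) := by simpa using hd
      obtain ⟨p, h1, h2, h3, h4, h5⟩ := match_exists hw hf (q := i'+1) (by omega) hin hd'
      have hm : isMatch n w p := ⟨i'+1, h2, hin, hd', h3.symm, h5⟩
      have hg2 : gOf n w (i'+1) = 2 :=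
        (gOf_eq_two_iff (by omega) hin).mpr (Or.inl hd')
      have hgp2 : gOf n w p = 2 :=
        (gOf_eq_two_iff (by omega) (by omega)).mpr (Or.inr ⟨h4, hm⟩)
      have hceven : cnt (gOf n w) (i'+1) = 2 * (Dn w (i'+1)).card :=
        cnt_gOf_desc hw hf (by omega) hin hd'
      have hcp : cnt (gOf n w) p = 2 * (Dn w p).card + 1 :=
        cnt_gOf_up hw hf (by omega) (by omega) h4 hm
      have hDD : Dn w (i'+1) = insert (i'+1) (Dn w p) := by
        ext l
        simp only [Dn, Finset.mem_filter, Finset.mem_Icc, Finset.mem_insert]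
        constructor
        · rintro ⟨⟨hl1, hl2⟩, hl3⟩
          rcases Nat.eq_or_lt_of_le hl2 with h | h
          · exact Or.inl h
          · refine Or.inr ⟨⟨hl1, ?_⟩, hl3⟩
            by_contra hc
            exact (h5 l (by omega) (by omega)) hl3
        · rintro (rfl | ⟨⟨hl1, hl2⟩, hl3⟩)
          · exact ⟨⟨by omega, le_refl _⟩, hd'⟩
          · exact ⟨⟨hl1, by omega⟩, hl3⟩
      have hDDc : (Dn w (i'+1)).card = (Dn w p).card + 1 := by
        rw [hDD, Finset.card_insert_of_notMem (by
          intro hmem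
          rw [Dn, Finset.mem_filter, Finset.mem_Icc] at hmem
          obtain ⟨⟨-, hx⟩, -⟩ := hmem
          omega)]
      have hdesc := bw_desc (n := n) (g := gOf n w) (p := p) hin hg2 (by omega) hgp2 (by omega)
      rw [hdesc, IH (p-1) (by omega), h3]
    · -- flat step
      have hg0 : gOf n w (i'+1) = 0 := gOf_eq_zero (by omega) hin (by simpa using he)
      rw [bw_flat hin (by omega) (by omega), hprev, he]
    · -- up step
      have hu' : w ((i'+1)-1) < w (i'+1) := by simpa using hu
      have heq : w (i'+1) = w i' + 1 := by omega
      by_cases hm : isMatch n w (i'+1)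
      · have hg2 : gOf n w (i'+1) = 2 :=
          (gOf_eq_two_iff (by omega) hin).mpr (Or.inr ⟨hu', hm⟩)
        have hcodd : cnt (gOf n w) (i'+1) = 2 * (Dn w (i'+1)).card + 1 :=
          cnt_gOf_up hw hf (by omega) hin hu' hm
        rw [bw_up hin (Or.inr ⟨hg2, by omega⟩), hprev, heq]
      · have hg1 : gOf n w (i'+1) = 1 := gOf_eq_one (by omega) hin hu' hm
        rw [bw_up hin (Or.inl hg1), hprev, heq]

lemma gOf_bw {g : ℕ → ℕ} (hval : ∀ t, g t ≤ 2)
    (hsupp : ∀ i, ¬(1 ≤ i ∧ i < n) → g i = 0)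
    (heven : cnt g (n-1) % 2 = 0) : gOf n (bw n g) = g := by
  have hn1 : (1:ℕ) ≤ n ∨ n = 0 := by omega
  funext i
  by_cases hir : 1 ≤ i ∧ i < n
  swap
  · rw [gOf_support hir, hsupp i hir]
  obtain ⟨i', rfl⟩ : ∃ i', i = i' + 1 := ⟨i-1, by omega⟩
  have hin : i' + 1 < n := hir.2
  set w := bw n g with hwdef
  have hva := hval (i'+1)
  interval_cases hgi : g (i'+1)
  · -- flat
    have := bw_flat (g := g) hin (by omega) (by omega)
    exact gOf_eq_zero (by omega) hin (by simpa using this)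
  · -- plain up: show not a match
    have hup : w (i'+1) = w i' + 1 := bw_up hin (Or.inl hgi)
    have hnm : ¬ isMatch n w (i'+1) := by
      intro hm
      obtain ⟨q, m1, m2, m3, m4, m5⟩ := hm
      simp only [Nat.add_sub_cancel] at m4
      obtain ⟨q', rfl⟩ : ∃ q', q = q' + 1 := ⟨q-1, by omega⟩
      have hdc : g (q'+1) = 2 ∧ cnt g (q'+1) % 2 = 0 :=
        (bw_desc_char hval m2).mp (by simpa using m3)
      have hc1 : 1 ≤ cnt g (q'+1) := by
        have := cnt_succ g q'; rw [if_pos hdc.1] at this; omega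
      obtain ⟨p, hp1, hp2, hp3, hp4⟩ := exists_rank (g := g) (r := cnt g (q'+1) - 1)
        (by omega) (q'+1) (by omega)
      have hwq : w (q'+1) = w (p-1) := bw_desc m2 hdc.1 hdc.2 hp3 (by omega)
      have hpq : p < q' + 1 := by
        rcases Nat.eq_or_lt_of_le hp2 with heq | h
        · subst heq; omega
        · exact h
      rcases lt_trichotomy p (i'+1) with hpi | hpi | hpi
      · -- p < i'+1 : w i' ≥ w p = w (p-1) + 1 = w (q'+1) + 1 = w i' + 1, absurd
        have hpup : w p = w (p-1) + 1 := by
          obtain ⟨p', rfl⟩ : ∃ p', p = p' + 1 := ⟨p-1, by omega⟩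
          exact bw_up (by omega) (Or.inr ⟨hp3, by omega⟩)
        have hmono : w p ≤ w i' := by
          apply bw_mono hval (by omega) (by omega)
          intro t ht1 ht2 ⟨hct, _⟩
          exact no_two_between hdc.1 (by omega) ht1 (by omega) hct
        omega
      · subst hpi; omega
      · -- p > i'+1 : w (i'+1) ≤ w (p-1) = w (q'+1) = w i', absurd
        have hmono : w (i'+1) ≤ w (p-1) := by
          apply bw_mono hval (by omega) (by omega)
          intro t ht1 ht2 hct
          obtain ⟨t', rfl⟩ : ∃ t', t = t' + 1 := ⟨t-1, by omega⟩
          have : w (t'+1) < w t' := bw_desc_lt hval (by omega) hct.1 hct.2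
          exact m5 (t'+1) (by omega) (by omega) (by simpa using this)
        omega
    have := gOf_eq_one (n := n) (w := w) (by omega) hin
      (by simp only [Nat.add_sub_cancel]; omega) hnm
    omega
  · -- a two: descent or matched up according to parity
    by_cases hev : cnt g (i'+1) % 2 = 0
    · have hdlt : w (i'+1) < w i' := bw_desc_lt hval hin hgi hev
      have := (gOf_eq_two_iff (n := n) (w := w) (by omega) hin).mpr (Or.inl (by simpa using hdlt))
      omega
    · -- odd rank: matched up
      have hup : w (i'+1) = w i' + 1 := bw_up hin (Or.inr ⟨hgi, by omega⟩)
      have hle : i' + 1 ≤ n - 1 := by omega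
      have hlt : cnt g (i'+1) < cnt g (n-1) := by
        have := cnt_mono g hle
        rcases Nat.eq_or_lt_of_le this with heq | h
        · omega
        · exact h
      obtain ⟨q, hq1, hq2, hq3, hq4⟩ := exists_rank (g := g) (r := cnt g (i'+1) + 1)
        (by omega) (n-1) (by omega)
      have hiq : i' + 1 < q := by
        by_contra hc
        have := cnt_mono g (show q ≤ i' + 1 by omega)
        omega
      obtain ⟨q', rfl⟩ : ∃ q', q = q' + 1 := ⟨q-1, by omega⟩
      have hqd : w (q'+1) < w q' := bw_desc_lt hval (by omega) hq3 (by omega)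
      have hwq : w (q'+1) = w i' := by
        have := bw_desc (n := n) (g := g) (p := i'+1) (by omega) hq3 (by omega) hgi (by omega)
        simpa using this
      have hm : isMatch n w (i'+1) := by
        refine ⟨q'+1, hiq, by omega, by simpa using hqd, by simpa using hwq, ?_⟩
        intro l hl1 hl2 hc
        obtain ⟨l', rfl⟩ : ∃ l', l = l' + 1 := ⟨l-1, by omega⟩
        have hgl : g (l'+1) = 2 ∧ cnt g (l'+1) % 2 = 0 :=
          (bw_desc_char (n := n) (i := l') hval (by omega)).mp (by simpa using hc)
        exact no_two_between (p := i'+1) (t := l'+1) hq3 (by omega) (by omega) hl2 hgl.1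
      have := (gOf_eq_two_iff (n := n) (w := w) (by omega) hin).mpr
        (Or.inr ⟨by simp only [Nat.add_sub_cancel]; omega, hm⟩)
      omega

end RoundTrip


lemma gOf_mem_Aset {n k : ℕ} {w : ℕ → ℕ} (hn : 1 ≤ n) (hw : IsCatalanWord n w)
    (hf : IsFlattened n w) (hwr : wruns n w = k) :
    gOf n w ∈ Aset (Finset.Icc 1 (n-1)) (2*k-2) := by
  have hD : wruns n w = 1 + (Dn w (n-1)).card := by
    rw [Dn]; exact wruns_finset hn w
  refine ⟨fun i => gOf_le_two n w i,
    fun i hi => gOf_support (by simp only [Finset.mem_Icc] at hi; omega), ?_⟩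
  have hcnt : cnt (gOf n w) (n-1) = (Dn w (n-1)).card + (Mn n w (n-1)).card :=
    cnt_gOf (by omega)
  have hM := MD_top hw hf hn
  show cnt (gOf n w) (n-1) = 2*k - 2
  omega


end FC


open FC in
/-- For `n, k ≥ 1` with `n ≥ 2k - 1`, the number of flattened Catalan words of
length `n` with exactly `k` runs of weak ascents equals
`2^(n - 2k + 1) * C(n - 1, 2k - 2)`; it is `0` when `n < 2k - 1`. -/
theorem flatCat_wruns_card (n k : ℕ) (hn : 1 ≤ n) (hk : 1 ≤ k) :
    (2 * k - 1 ≤ n →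
      {w ∈ FlatCat n | wruns n w = k}.ncard =
        2 ^ (n + 1 - 2 * k) * Nat.choose (n - 1) (2 * k - 2)) ∧
    (n < 2 * k - 1 → {w ∈ FlatCat n | wruns n w = k}.ncard = 0) := by
  have hset : {w ∈ FlatCat n | wruns n w = k} =
      bw n '' (Aset (Finset.Icc 1 (n-1)) (2*k-2)) := by
    ext w
    simp only [Set.mem_setOf_eq, Set.mem_image, FlatCat]
    constructor
    · rintro ⟨⟨hw, hf⟩, hwr⟩
      exact ⟨gOf n w, gOf_mem_Aset hn hw hf hwr, bw_gOf hw hf⟩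
    · rintro ⟨g, hg, rfl⟩
      obtain ⟨hval, hsupp, hcard⟩ := hg
      refine ⟨⟨bw_catalan, bw_flattened hval⟩, ?_⟩
      rw [bw_wruns hn hval]
      have hc : cnt g (n-1) = 2*k-2 := hcard
      omega
  have hinj : Set.InjOn (bw n) (Aset (Finset.Icc 1 (n-1)) (2*k-2)) := by
    intro g1 h1 g2 h2 heq
    have e1 : gOf n (bw n g1) = g1 :=
      gOf_bw h1.1 (fun i hi => h1.2.1 i (by simp only [Finset.mem_Icc]; omega))
        (by have hc : cnt g1 (n-1) = 2*k-2 := h1.2.2; omega)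
    have e2 : gOf n (bw n g2) = g2 :=
      gOf_bw h2.1 (fun i hi => h2.2.1 i (by simp only [Finset.mem_Icc]; omega))
        (by have hc : cnt g2 (n-1) = 2*k-2 := h2.2.2; omega)
    rw [← e1, ← e2, heq]
  have hicc : (Finset.Icc 1 (n-1)).card = n - 1 := by
    rw [Nat.card_Icc]; omega
  have hcard : {w ∈ FlatCat n | wruns n w = k}.ncard =
      (n-1).choose (2*k-2) * 2^((n-1) - (2*k-2)) := by
    rw [hset, Set.ncard_image_of_injOn hinj, Aset_card, hicc]
  constructor
  · intro h
    have he : (n-1) - (2*k-2) = n+1-2*k := by omega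
    rw [hcard, he, mul_comm]
  · intro h
    rw [hcard, Nat.choose_eq_zero_of_lt (by omega)]
    simp
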